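/- Let k be a positive integer and d an integer with 1 ≤ d ≤ k-1, and set k_d = k - d. Define the k_d × k_d matrix C̃(k,d) with entries C̃(k,d)_{s,t} = binomial(k, k_d + s - t) for 1 ≤ s,t ≤ k_d (with the convention that binomial(k, m) = 0 for m > k or m < 0). Then the determinant of C̃(k,d) is nonzero. -/
import Mathlib

open Matrix Finset Polynomial

/-- The matrix `C̃(k,d)` with entries `C̃(k,d)_{s,t} = C(k, k_d + s - t)`, `k_d = k - d`,
(for `1 ≤ s,t ≤ k_d`, here with 0-based indices in `Fin (k-d)`; `C(k,m) = 0` for `m > k`)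
has nonzero determinant, for `1 ≤ d ≤ k-1`. -/
theorem matCtilde_det_ne_zero (k d : ℕ) (hd1 : 1 ≤ d) (hd2 : d ≤ k - 1) :
    (Matrix.of fun s t : Fin (k - d) =>
      ((Nat.choose k (k - d + s.val - t.val) : ℕ) : ℚ)).det ≠ 0 := by
  set a := k - d with ha
  have hk2 : 2 ≤ k := by omega
  have ha1 : 1 ≤ a := by omega
  have hka : k = a + d := by omega
  intro hdet
  obtain ⟨v, hv, hmv⟩ := Matrix.exists_mulVec_eq_zero_iff.mpr hdet
  -- the polynomial with coefficients v
  set P : Polynomial ℚ := ∑ t : Fin a, Polynomial.C (v t) * Polynomial.X ^ (t : ℕ) with hP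
  have hPcoeff : ∀ t : Fin a, P.coeff t = v t := by
    intro t
    rw [hP, Polynomial.finset_sum_coeff]
    rw [Finset.sum_eq_single t]
    · simp
    · intro b _ hbt
      simp only [coeff_C_mul, coeff_X_pow]
      rw [if_neg (fun h => hbt (Fin.ext h.symm))]
      ring
    · simp
  have hPdeg : P.natDegree ≤ a - 1 := by
    apply Polynomial.natDegree_sum_le_of_forall_le
    intro t _
    refine le_trans (Polynomial.natDegree_C_mul_le _ _) ?_
    simpa using Nat.le_sub_one_of_lt t.isLt
  have hPne : P ≠ 0 := by
    obtain ⟨t, ht⟩ := Function.ne_iff.mp hv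
    intro h
    exact ht (by rw [← hPcoeff t, h]; simp)
  set Q : Polynomial ℚ := (Polynomial.X + 1) ^ k * P with hQ
  -- key vanishing of coefficients a .. 2a-1
  have hQcoeff : ∀ s : Fin a, Q.coeff (a + s) = 0 := by
    intro s
    have h1 : Q.coeff (a + s) = ∑ t : Fin a,
        ((Nat.choose k (a + s.val - t.val) : ℕ) : ℚ) * v t := by
      rw [hQ, hP, Finset.mul_sum, Polynomial.finset_sum_coeff]
      refine Finset.sum_congr rfl fun t _ => ?_
      rw [show ((Polynomial.X + 1 : Polynomial ℚ) ^ k) * (Polynomial.C (v t) *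
          Polynomial.X ^ (t : ℕ)) = Polynomial.C (v t) *
          ((Polynomial.X + 1) ^ k * Polynomial.X ^ (t : ℕ)) from by ring,
        Polynomial.coeff_C_mul, Polynomial.coeff_mul_X_pow',
        if_pos (le_trans (Nat.le_of_lt_succ (Nat.lt_succ_of_lt t.isLt)) (Nat.le_add_right a s)),
        Polynomial.coeff_X_add_one_pow]
      ring
    have h2 := congrFun hmv s
    rw [Matrix.mulVec, dotProduct] at h2
    simp only [Matrix.of_apply, Pi.zero_apply] at h2
    rw [h1]; exact h2
  -- the a-th iterated derivative
  set R : Polynomial ℚ := Polynomial.derivative^[a] Q with hR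
  have hdvd1 : (Polynomial.X + 1) ^ d ∣ R := by
    have : ((Polynomial.X + 1) ^ k : Polynomial ℚ) ∣ Q := Dvd.intro _ rfl
    have h := Polynomial.pow_sub_dvd_iterate_derivative_of_pow_dvd a this
    rwa [show k - a = d by omega] at h
  have hdvd2 : (Polynomial.X : Polynomial ℚ) ^ a ∣ R := by
    rw [Polynomial.X_pow_dvd_iff]
    intro n hn
    rw [hR, Polynomial.coeff_iterate_derivative, Nat.add_comm n a,
      hQcoeff ⟨n, hn⟩, smul_zero]
  have hcop : IsCoprime ((Polynomial.X : Polynomial ℚ) ^ a) ((Polynomial.X + 1) ^ d) :=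
    IsCoprime.pow ⟨-1, 1, by ring⟩
  have hdvd : (Polynomial.X : Polynomial ℚ) ^ a * (Polynomial.X + 1) ^ d ∣ R :=
    hcop.mul_dvd hdvd2 hdvd1

  have hm1 : (Polynomial.X + 1 : Polynomial ℚ).Monic := by
    simpa using Polynomial.monic_X_add_C (1 : ℚ)
  have hdeg1 : (Polynomial.X + 1 : Polynomial ℚ).natDegree = 1 := by
    simpa using Polynomial.natDegree_X_add_C (1 : ℚ)
  have hdegk : ((Polynomial.X + 1 : Polynomial ℚ) ^ k).natDegree = k := by
    rw [Polynomial.natDegree_pow, hdeg1, mul_one]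
  have hQdeg : Q.natDegree ≤ k + (a - 1) :=
    le_trans (Polynomial.natDegree_mul_le) (by omega)
  have hRdeg : R.natDegree < k := by
    have := Polynomial.natDegree_iterate_derivative Q a
    rw [← hR] at this
    omega
  have hR0 : R = 0 := by
    apply Polynomial.eq_zero_of_dvd_of_natDegree_lt hdvd
    have : ((Polynomial.X : Polynomial ℚ) ^ a * (Polynomial.X + 1) ^ d).natDegree = a + d := by
      rw [(Polynomial.monic_X_pow a).natDegree_mul (hm1.pow d)]
      rw [Polynomial.natDegree_pow, Polynomial.natDegree_pow, hdeg1, Polynomial.natDegree_X]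
      ring
    omega
  -- hence all coefficients of Q from degree a on vanish
  have hQtop : ∀ n : ℕ, Q.coeff (n + a) = 0 := by
    intro n
    have := Polynomial.coeff_iterate_derivative (k := a) Q n
    rw [← hR, hR0, Polynomial.coeff_zero] at this
    have hdf : (n + a).descFactorial a ≠ 0 := by
      rw [Ne, Nat.descFactorial_eq_zero_iff_lt]
      omega
    have := this.symm
    rw [smul_eq_zero] at this
    rcases this with h | h
    · exact absurd (by exact_mod_cast h) hdf
    · exact h
  -- but Q is monic-ish of degree ≥ a
  have hQne : Q ≠ 0 := mul_ne_zero (hm1.pow k).ne_zero hPne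
  have hQdeg' : Q.natDegree = k + P.natDegree := by
    rw [hQ, Polynomial.natDegree_mul (hm1.pow k).ne_zero hPne, hdegk]
  have : Q.coeff Q.natDegree ≠ 0 := by
    rw [← Polynomial.leadingCoeff]
    exact Polynomial.leadingCoeff_ne_zero.mpr hQne
  apply this
  have : Q.natDegree = (Q.natDegree - a) + a := by omega
  rw [this]
  exact hQtop _
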